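/- Let d ≥ 1 and (i_0,…,i_{d−1}) ∈ (Fin d)^d. Then: (a) if i_l = l⊕1 for every l ∈ Fin d, the controlled-order Kraus operator S_{i_0,…,i_{d−1}} equals P_0 := Σ_{j∈Fin d} |j⟩⟨j| ⊗ |j⟩⟨j|; (b) if there is exactly one l ∈ Fin d with i_l ≠ l⊕1, then, writing j := l⊕1, S_{i_0,…,i_{d−1}} = |j⟩⟨i_{j⊖1}| ⊗ |j⟩⟨j|; (c) if i_l ≠ l⊕1 for at least two distinct values of l, then S_{i_0,…,i_{d−1}} = 0. -/

import Mathlib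

open Matrix Kronecker BigOperators Complex

noncomputable def Emat (d : ℕ) (j i : Fin d) : Matrix (Fin d) (Fin d) ℂ :=
  Matrix.single j i 1

noncomputable def P0 (d : ℕ) : Matrix (Fin d × Fin d) (Fin d × Fin d) ℂ :=
  ∑ j : Fin d, Emat d j j ⊗ₖ Emat d j j

noncomputable def Sop (d : ℕ) [NeZero d] (idx : Fin d → Fin d) :
    Matrix (Fin d × Fin d) (Fin d × Fin d) ℂ :=
  ∑ j : Fin d,
    (((List.finRange d).map (fun k => Emat d (j + k) (idx (j + k)))).prod) ⊗ₖ Emat d j j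

open Fin.NatCast Fin.CommRing

lemma Emat_mul (d : ℕ) (a b c e : Fin d) :
    Emat d a b * Emat d c e = if b = c then Emat d a e else 0 := by
  unfold Emat
  split
  · subst ‹b = c›
    rw [Matrix.single_mul_single_same, one_mul]
  · exact Matrix.single_mul_single_of_ne (c := (1 : ℂ)) a b c ‹b ≠ c› 1

lemma aux_prod (d : ℕ) [NeZero d] (idx : Fin d → Fin d) (j : Fin d) : ∀ n : ℕ,
    ((List.range (n+1)).map
      (fun k : ℕ => Emat d (j + (k : Fin d)) (idx (j + (k : Fin d))))).prod =
    if ∀ k : ℕ, k < n → idx (j + (k : Fin d)) = j + (k : Fin d) + 1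
      then Emat d j (idx (j + (n : Fin d))) else 0 := by
  intro n
  induction n with
  | zero => simp [List.range_succ]
  | succ n ih =>
    rw [List.range_succ, List.map_append, List.prod_append, ih]
    simp only [List.map_cons, List.map_nil, List.prod_cons, List.prod_nil, mul_one]
    by_cases h : ∀ k : ℕ, k < n → idx (j + (k : Fin d)) = j + (k : Fin d) + 1
    · rw [if_pos h, Emat_mul]
      by_cases h2 : idx (j + (n : Fin d)) = j + (n : Fin d) + 1
      · have hall : ∀ k : ℕ, k < n + 1 → idx (j + (k : Fin d)) = j + (k : Fin d) + 1 := by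
          intro k hk
          rcases Nat.lt_succ_iff_lt_or_eq.mp hk with hk' | rfl
          · exact h k hk'
          · exact h2
        rw [if_pos (show idx (j + (n : Fin d)) = j + ((n + 1 : ℕ) : Fin d) by
          rw [h2]; push_cast; ring), if_pos hall]
      · rw [if_neg (show ¬ idx (j + (n : Fin d)) = j + ((n + 1 : ℕ) : Fin d) by
          intro he; apply h2; rw [he]; push_cast; ring),
          if_neg (by intro hall; exact h2 (hall n (by omega)))]
    · rw [if_neg h, zero_mul,
        if_neg (fun hall => h (fun k hk => hall k (hk.trans (Nat.lt_succ_self n))))]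

lemma neg_one_cast (d : ℕ) [NeZero d] : ((d - 1 : ℕ) : Fin d) = -1 := by
  have hd : 0 < d := Nat.pos_of_ne_zero (NeZero.ne d)
  have : ((d - 1 : ℕ) : Fin d) + 1 = 0 := by
    have : ((d - 1 : ℕ) : Fin d) + 1 = ((d - 1 + 1 : ℕ) : Fin d) := by push_cast; ring
    rw [this, Nat.sub_add_cancel hd, Fin.natCast_self]
  linear_combination this

lemma cond_iff (d : ℕ) [NeZero d] (idx : Fin d → Fin d) (j : Fin d) :
    (∀ k : ℕ, k < d - 1 → idx (j + (k : Fin d)) = j + (k : Fin d) + 1) ↔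
    (∀ l : Fin d, l ≠ j - 1 → idx l = l + 1) := by
  have hd : 0 < d := Nat.pos_of_ne_zero (NeZero.ne d)
  constructor
  · intro h l hl
    set k : ℕ := ((l - j : Fin d) : ℕ) with hk
    have hjk : j + (k : Fin d) = l := by
      rw [hk, Fin.cast_val_eq_self]; ring
    have hkd : k < d := (l - j).isLt
    have hkne : k ≠ d - 1 := by
      intro he
      apply hl
      have : (l - j : Fin d) = -1 := by
        rw [← Fin.cast_val_eq_self (l - j), ← hk, he, neg_one_cast]
      linear_combination this
    have := h k (lt_of_le_of_ne (Nat.le_sub_one_of_lt hkd) hkne)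
    rwa [hjk] at this
  · intro h k hk
    apply h
    intro he
    have : ((k : Fin d) : ℕ) = ((-1 : Fin d) : ℕ) := by
      congr 1
      linear_combination he
    rw [Fin.val_natCast, Nat.mod_eq_of_lt (hk.trans (Nat.sub_lt hd one_pos)),
      ← neg_one_cast d, Fin.val_natCast, Nat.mod_eq_of_lt (Nat.sub_lt hd one_pos)] at this
    exact absurd this hk.ne

lemma finRange_prod (d : ℕ) [NeZero d] (idx : Fin d → Fin d) (j : Fin d) :
    ((List.finRange d).map (fun k => Emat d (j + k) (idx (j + k)))).prod =
    if ∀ l : Fin d, l ≠ j - 1 → idx l = l + 1 then Emat d j (idx (j - 1)) else 0 := by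
  have hd : 0 < d := Nat.pos_of_ne_zero (NeZero.ne d)
  have hmap : (List.finRange d).map (fun k => Emat d (j + k) (idx (j + k))) =
      (List.range d).map
        (fun k : ℕ => Emat d (j + (k : Fin d)) (idx (j + (k : Fin d)))) := by
    apply List.ext_getElem (by simp)
    intro i h1 h2
    simp only [List.getElem_map, List.getElem_finRange, List.getElem_range]
    have hi : i < d := by simpa using h1
    have hcast : ((i : ℕ) : Fin d) = ⟨i, hi⟩ := by
      apply Fin.ext; simp [Fin.val_natCast, Nat.mod_eq_of_lt hi]
    rw [hcast]
    rfl
  rw [hmap]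
  obtain ⟨m, rfl⟩ : ∃ m, d = m + 1 := ⟨d - 1, (Nat.sub_add_cancel hd).symm⟩
  rw [aux_prod]
  have hm : (m + 1) - 1 = m := rfl
  rw [show ((m : Fin (m+1)) : Fin (m+1)) = -1 by
    have := neg_one_cast (m + 1); rwa [hm] at this]
  rw [show j + (-1 : Fin (m+1)) = j - 1 by ring]
  congr 1
  rw [← cond_iff (m + 1) idx j, hm]

/-- the three cases for the controlled-order Kraus operators. -/
theorem stmt_1 (d : ℕ) [NeZero d] (idx : Fin d → Fin d) :
    ((∀ l : Fin d, idx l = l + 1) → Sop d idx = P0 d) ∧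
    (∀ l : Fin d, idx l ≠ l + 1 → (∀ l' : Fin d, l' ≠ l → idx l' = l' + 1) →
      Sop d idx = Emat d (l + 1) (idx ((l + 1) - 1)) ⊗ₖ Emat d (l + 1) (l + 1)) ∧
    (∀ l₁ l₂ : Fin d, l₁ ≠ l₂ → idx l₁ ≠ l₁ + 1 → idx l₂ ≠ l₂ + 1 →
      Sop d idx = 0) := by
  refine ⟨?_, ?_, ?_⟩
  · intro hall
    unfold Sop P0
    apply Finset.sum_congr rfl
    intro j _
    rw [finRange_prod, if_pos (fun l _ => hall l), hall (j - 1), sub_add_cancel]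
  · intro l hl hrest
    unfold Sop
    rw [Finset.sum_eq_single (l + 1)]
    · rw [finRange_prod, if_pos (by intro l' hl'; exact hrest l' (by
        intro he; apply hl'; rw [he]; ring))]
    · intro j _ hj
      rw [finRange_prod, if_neg (by
        intro hc
        exact hl (hc l (by intro he; apply hj; rw [show l = j - 1 from he]; ring)))]
      rw [Matrix.zero_kronecker]
    · intro h; exact absurd (Finset.mem_univ _) h
  · intro l₁ l₂ hne h1 h2
    unfold Sop
    apply Finset.sum_eq_zero
    intro j _
    rw [finRange_prod, if_neg (by
      intro hc
      by_cases he : l₁ = j - 1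
      · exact h2 (hc l₂ (fun he2 => hne (he.trans he2.symm)))
      · exact h1 (hc l₁ he))]
    rw [Matrix.zero_kronecker]
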